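/- Let q : ℕ → ℝ be a non-increasing sequence of non-negative numbers with q 0 > 0, and Q n = ∑_{k=0}^{n-1} q k. If 2^k · q(2^k)/Q(2^k) → 0 as k → ∞, then (1/Q(2^n)) · ∑_{k=0}^{n} Q(2^k) → ∞ as n → ∞. -/

import Mathlib

open Filter Topology

theorem stmt_5 (q : ℕ → ℝ) (hq : Antitone q) (hq0 : ∀ k, 0 ≤ q k) (hq0' : 0 < q 0)
    (Q : ℕ → ℝ) (hQ : ∀ n, Q n = ∑ k ∈ Finset.range n, q k)
    (h0 : Tendsto (fun k => 2 ^ k * q (2 ^ k) / Q (2 ^ k)) atTop (nhds 0)) :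
    Tendsto (fun n => (1 / Q (2 ^ n)) * ∑ k ∈ Finset.range (n + 1), Q (2 ^ k))
      atTop atTop := by
  have hQpos : ∀ k : ℕ, 0 < Q (2 ^ k) := by
    intro k
    rw [hQ]
    have h1 : (1:ℕ) ≤ 2 ^ k := Nat.one_le_two_pow
    calc (0:ℝ) < q 0 := hq0'
      _ ≤ ∑ j ∈ Finset.range (2 ^ k), q j :=
        Finset.single_le_sum (f := q) (fun i _ => hq0 i) (by simpa using h1)
  have hQmono : ∀ a b : ℕ, a ≤ b → Q a ≤ Q b := by
    intro a b hab
    rw [hQ, hQ]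
    exact Finset.sum_le_sum_of_subset_of_nonneg (Finset.range_subset_range.mpr hab)
      (fun i _ _ => hq0 i)
  have hstep : ∀ k : ℕ, Q (2 ^ (k + 1)) ≤ Q (2 ^ k) + 2 ^ k * q (2 ^ k) := by
    intro k
    rw [hQ (2 ^ (k + 1)), hQ (2 ^ k)]
    have h1 : 2 ^ k ≤ 2 ^ (k + 1) := Nat.pow_le_pow_right (by norm_num) (Nat.le_succ k)
    rw [Finset.range_eq_Ico, ← Finset.sum_Ico_consecutive _ (Nat.zero_le _) h1,
      ← Finset.range_eq_Ico]
    have h2 : ∑ j ∈ Finset.Ico (2 ^ k) (2 ^ (k + 1)), q j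
        ≤ ∑ _j ∈ Finset.Ico (2 ^ k) (2 ^ (k + 1)), q (2 ^ k) :=
      Finset.sum_le_sum (fun i hi => hq (Finset.mem_Ico.mp hi).1)
    have h3 : ∑ _j ∈ Finset.Ico (2 ^ k) (2 ^ (k + 1)), q (2 ^ k)
        = (2 : ℝ) ^ k * q (2 ^ k) := by
      rw [Finset.sum_const, Nat.card_Ico]
      have : 2 ^ (k + 1) - 2 ^ k = 2 ^ k := by
        rw [pow_succ]; omega
      rw [this, nsmul_eq_mul]
      push_cast
      ring
    linarith
  set ε : ℕ → ℝ := fun k => 2 ^ k * q (2 ^ k) / Q (2 ^ k) with hε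
  set r : ℕ → ℝ := fun k => Q (2 ^ (k + 1)) / Q (2 ^ k) with hr
  have hr1 : ∀ k, 1 ≤ r k := fun k =>
    (one_le_div (hQpos k)).mpr
      (hQmono _ _ (Nat.pow_le_pow_right (by norm_num) (Nat.le_succ k)))
  have hr2 : ∀ k, r k ≤ 1 + ε k := by
    intro k
    have := hstep k
    have h1 : r k ≤ (Q (2 ^ k) + 2 ^ k * q (2 ^ k)) / Q (2 ^ k) := by
      show Q (2 ^ (k + 1)) / Q (2 ^ k) ≤ _
      gcongr
      exact (hQpos k).le
    have h2 : (Q (2 ^ k) + 2 ^ k * q (2 ^ k)) / Q (2 ^ k) = 1 + ε k := by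
      rw [add_div, div_self (hQpos k).ne', hε]
    linarith
  have hrt : Tendsto r atTop (𝓝 1) := by
    have hupper : Tendsto (fun k => 1 + ε k) atTop (𝓝 1) := by
      simpa using tendsto_const_nhds.add h0
    exact tendsto_of_tendsto_of_tendsto_of_le_of_le tendsto_const_nhds hupper hr1 hr2
  have hratio : ∀ j : ℕ, Tendsto (fun n => Q (2 ^ n) / Q (2 ^ (n + j))) atTop (𝓝 1) := by
    intro j
    induction j with
    | zero =>
      refine tendsto_const_nhds.congr fun n => ?_
      simp [div_self (hQpos n).ne']
    | succ j ih =>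
      have h2 : Tendsto (fun n => Q (2 ^ (n + j)) / Q (2 ^ (n + j + 1))) atTop (𝓝 1) := by
        have hinv : Tendsto (fun n => (r (n + j))⁻¹) atTop (𝓝 1) := by
          have := (hrt.comp (tendsto_add_atTop_nat j)).inv₀ one_ne_zero
          simpa using this
        refine hinv.congr (fun n => ?_)
        rw [hr]
        rw [inv_div]
      have := ih.mul h2
      rw [mul_one] at this
      refine this.congr (fun n => ?_)
      have h1 := (hQpos (n + j)).ne'
      field_simp
      rfl
  have hg : ∀ j : ℕ, Tendsto (fun n => Q (2 ^ (n - j)) / Q (2 ^ n)) atTop (𝓝 1) := by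
    intro j
    have h1 := (hratio j).comp (tendsto_sub_atTop_nat j)
    refine h1.congr' ?_
    filter_upwards [eventually_ge_atTop j] with n hn
    simp [Function.comp, Nat.sub_add_cancel hn]
  rw [tendsto_atTop]
  intro C
  obtain ⟨m, hm⟩ := exists_nat_ge (C + 1)
  have hsum : Tendsto (fun n => ∑ j ∈ Finset.range m, Q (2 ^ (n - j)) / Q (2 ^ n))
      atTop (𝓝 m) := by
    have := tendsto_finset_sum (Finset.range m) (fun j _ => hg j)
    simpa using this
  have hCm : C < (m : ℝ) := by linarith
  have hev : ∀ᶠ n in atTop, C < ∑ j ∈ Finset.range m, Q (2 ^ (n - j)) / Q (2 ^ n) :=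
    hsum.eventually (eventually_gt_nhds hCm)
  filter_upwards [hev, eventually_ge_atTop m] with n h1 h2
  have hsub : ∑ j ∈ Finset.range m, Q (2 ^ (n - j)) ≤ ∑ k ∈ Finset.range (n + 1), Q (2 ^ k) := by
    have himg : ∑ j ∈ Finset.range m, Q (2 ^ (n - j))
        = ∑ k ∈ (Finset.range m).image (fun j => n - j), Q (2 ^ k) := by
      rw [Finset.sum_image]
      intro i hi j hj hij
      have hi' := Finset.mem_range.mp hi
      have hj' := Finset.mem_range.mp hj
      dsimp only at hij
      omega
    rw [himg]
    apply Finset.sum_le_sum_of_subset_of_nonneg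
    · intro k hk
      simp only [Finset.mem_image, Finset.mem_range] at hk ⊢
      obtain ⟨j, _, rfl⟩ := hk
      omega
    · intro k _ _
      exact (hQpos k).le
  calc C ≤ ∑ j ∈ Finset.range m, Q (2 ^ (n - j)) / Q (2 ^ n) := h1.le
    _ = (∑ j ∈ Finset.range m, Q (2 ^ (n - j))) / Q (2 ^ n) := (Finset.sum_div _ _ _).symm
    _ ≤ (∑ k ∈ Finset.range (n + 1), Q (2 ^ k)) / Q (2 ^ n) := by
        gcongr
        exact (hQpos n).le
    _ = (1 / Q (2 ^ n)) * ∑ k ∈ Finset.range (n + 1), Q (2 ^ k) := by ring
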